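/- If φ : ℕ → ℕ is nondecreasing and satisfies φ(m+n) ≥ φ(m) for all m,n (monotonicity of the profile), and the generating series ∑ φ(n)Z^n equals P(Z)/((1-Z)(1-Z²)⋯(1-Z^k)) with P ∈ ℤ[Z] and P(1) > 0, then φ(n) grows like a·n^{k-1}: there exist positive reals a,b with a·n^{k-1} ≤ φ(n) ≤ b·n^{k-1} for all sufficiently large n. -/

import Mathlib

open Filter PowerSeries Finset Topology

noncomputable def Gser (L j : ℕ) : PowerSeries ℤ :=
  PowerSeries.mk fun n => if L ∣ n then ((n / L + j).choose j : ℤ) else 0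

noncomputable def Hser (L j : ℕ) : PowerSeries ℤ :=
  PowerSeries.mk fun n => ((n / L + j).choose j : ℤ)

lemma coeff_sub_aux (f : PowerSeries ℤ) (d n : ℕ) :
    (PowerSeries.coeff (R := ℤ) n) (f * (1 - X ^ d)) =
      PowerSeries.coeff (R := ℤ) n f - if d ≤ n then PowerSeries.coeff (R := ℤ) (n - d) f else 0 := by
  rw [mul_sub, mul_one, map_sub, PowerSeries.coeff_mul_X_pow']

lemma sub_one_div_helper {L n : ℕ} (hL : 0 < L) (hn : 0 < n) :
    (n - 1) / L = if L ∣ n then n / L - 1 else n / L := by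
  have h := Nat.div_add_mod n L
  have hr : n % L < L := Nat.mod_lt _ hL
  by_cases hd : n % L = 0
  · have hLn : L ∣ n := Nat.dvd_of_mod_eq_zero hd
    have hq : 0 < n / L := Nat.div_pos (Nat.le_of_dvd hn hLn) hL
    have h2 : L * (n / L - 1) = L * (n / L) - L := by
      rw [Nat.mul_sub, Nat.mul_one]
    have hLle : L ≤ L * (n / L) := Nat.le_mul_of_pos_right L hq
    have key : n - 1 = (L - 1) + L * (n / L - 1) := by
      rw [h2]; omega
    rw [if_pos hLn, key, Nat.add_mul_div_left _ _ hL, Nat.div_eq_of_lt (by omega)]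
    omega
  · have hLn : ¬ L ∣ n := fun hc => hd (Nat.mod_eq_zero_of_dvd hc)
    have key : n - 1 = (n % L - 1) + L * (n / L) := by omega
    rw [if_neg hLn, key, Nat.add_mul_div_left _ _ hL, Nat.div_eq_of_lt (by omega)]
    omega

lemma sub_L_div_helper {L n : ℕ} (hL : 0 < L) (hd : L ∣ n) (hn : L ≤ n) :
    (n - L) / L = n / L - 1 := by
  obtain ⟨m, rfl⟩ := hd
  have hm : 1 ≤ m := by
    by_contra hc
    push_neg at hc
    interval_cases m <;> omega
  have : L * m - L = L * (m - 1) := by rw [Nat.mul_sub, Nat.mul_one]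
  rw [this, Nat.mul_div_cancel_left _ hL, Nat.mul_div_cancel_left _ hL]

lemma Gser_zero_mul {L : ℕ} (hL : 0 < L) : Gser L 0 * (1 - X ^ L) = 1 := by
  ext n
  rw [coeff_sub_aux]
  simp only [Gser, PowerSeries.coeff_mk, Nat.choose_zero_right, Nat.cast_one,
    PowerSeries.coeff_one]
  by_cases hdvd : L ∣ n
  · by_cases hn : L ≤ n
    · have h1 : L ∣ n - L := Nat.dvd_sub hdvd dvd_rfl
      have : n ≠ 0 := by omega
      simp [h1, hdvd, hn, this]
    · have hn0 : n = 0 := by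
        rcases Nat.eq_zero_or_pos n with h | h
        · exact h
        · exact absurd (Nat.le_of_dvd h hdvd) hn
      subst hn0
      simp [show ¬ L ≤ 0 by omega]
  · have hn0 : n ≠ 0 := by rintro rfl; exact hdvd (dvd_zero L)
    have h2 : ∀ _ : L ≤ n, ¬ L ∣ (n - L) := fun hle hc =>
      hdvd (by have := Nat.sub_add_cancel hle ▸ dvd_add hc dvd_rfl; simpa using this)
    rw [if_neg hdvd, if_neg hn0]
    split_ifs with h h'
    · exact absurd h' (h2 h)
    · simp
    · simp

lemma Gser_succ_mul {L : ℕ} (hL : 0 < L) (j : ℕ) :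
    Gser L (j + 1) * (1 - X ^ L) = Gser L j := by
  ext n
  rw [coeff_sub_aux]
  simp only [Gser, PowerSeries.coeff_mk]
  by_cases hdvd : L ∣ n
  · by_cases hn : L ≤ n
    · have h1 : L ∣ n - L := Nat.dvd_sub hdvd dvd_rfl
      have hdiv : (n - L) / L = n / L - 1 := sub_L_div_helper hL hdvd hn
      have hq : 0 < n / L := Nat.div_pos hn hL
      rw [if_pos hdvd, if_pos hn, if_pos h1, if_pos hdvd, hdiv]
      obtain ⟨m, hm⟩ : ∃ m, n / L = m + 1 := ⟨n / L - 1, by omega⟩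
      rw [hm]
      simp only [Nat.add_sub_cancel]
      rw [show m + 1 + (j + 1) = (m + (j + 1)) + 1 from by omega, Nat.choose_succ_succ']
      push_cast
      rw [show m + (j + 1) = m + 1 + j from by omega]
      ring
    · have : n = 0 := by
        rcases Nat.eq_zero_or_pos n with h | h
        · exact h
        · exact absurd (Nat.le_of_dvd h hdvd) hn
      subst this
      simp [hdvd, hn]
  · have h2 : ∀ hle : L ≤ n, ¬ L ∣ (n - L) := fun hle hc =>
      hdvd (by have := Nat.sub_add_cancel hle ▸ dvd_add hc dvd_rfl; simpa using this)
    rw [if_neg hdvd, if_neg hdvd]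
    split_ifs with h h'
    · exact absurd h' (h2 h)
    · simp
    · simp

lemma Gser_mul_pow {L : ℕ} (hL : 0 < L) (j : ℕ) :
    Gser L j * (1 - X ^ L) ^ (j + 1) = 1 := by
  induction j with
  | zero => simpa using Gser_zero_mul hL
  | succ j ih =>
      have : Gser L (j+1) * (1 - X ^ L) ^ (j + 2) =
          (Gser L (j+1) * (1 - X ^ L)) * (1 - X ^ L) ^ (j + 1) := by ring
      rw [this, Gser_succ_mul hL j, ih]

lemma Hser_mul_one_sub {L : ℕ} (hL : 0 < L) (j : ℕ) :
    Hser L (j + 1) * (1 - X) = Gser L j := by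
  ext n
  have : (1 - X : PowerSeries ℤ) = 1 - X ^ 1 := by rw [pow_one]
  rw [this, coeff_sub_aux]
  simp only [Hser, Gser, PowerSeries.coeff_mk]
  rcases Nat.eq_zero_or_pos n with rfl | hn
  · simp [Nat.dvd_zero]
  · rw [if_pos (show 1 ≤ n from hn), sub_one_div_helper hL hn]
    by_cases hdvd : L ∣ n
    · have hq : 0 < n / L := Nat.div_pos (Nat.le_of_dvd hn hdvd) hL
      rw [if_pos hdvd, if_pos hdvd]
      obtain ⟨m, hm⟩ : ∃ m, n / L = m + 1 := ⟨n / L - 1, by omega⟩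
      rw [hm]
      simp only [Nat.add_sub_cancel]
      rw [show m + 1 + (j + 1) = (m + (j + 1)) + 1 from by omega, Nat.choose_succ_succ']
      push_cast
      rw [show m + (j + 1) = m + 1 + j from by omega]
      ring
    · rw [if_neg hdvd, if_neg hdvd]
      ring

lemma prod_one_sub_mul_geom (k L : ℕ) (hdvd : ∀ i ∈ range k, (i + 1) ∣ L) :
    (∏ i ∈ range k, (1 - (X : PowerSeries ℤ) ^ (i + 1))) *
      (∏ i ∈ range k, ∑ t ∈ range (L / (i + 1)), ((X : PowerSeries ℤ) ^ (i + 1)) ^ t)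
      = (1 - X ^ L) ^ k := by
  rw [← Finset.prod_mul_distrib,
    show ((1 : PowerSeries ℤ) - X ^ L) ^ k = ∏ _i ∈ range k, (1 - X ^ L) from by
      rw [Finset.prod_const, card_range]]
  refine Finset.prod_congr rfl fun i hi => ?_
  have hx : ((X : PowerSeries ℤ) ^ (i + 1)) ^ (L / (i + 1)) = X ^ L := by
    rw [← pow_mul, Nat.mul_div_cancel' (hdvd i hi)]
  calc (1 - (X : PowerSeries ℤ) ^ (i + 1)) * ∑ t ∈ range (L / (i + 1)), (X ^ (i + 1)) ^ t
      = -((∑ t ∈ range (L / (i + 1)), ((X : PowerSeries ℤ) ^ (i + 1)) ^ t) *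
          (X ^ (i + 1) - 1)) := by ring
    _ = -(((X : PowerSeries ℤ) ^ (i + 1)) ^ (L / (i + 1)) - 1) := by rw [geom_sum_mul]
    _ = 1 - X ^ L := by rw [hx]; ring

lemma coe_R_eq (k L : ℕ) :
    ((∏ i ∈ range k, ∑ t ∈ range (L / (i + 1)),
        (Polynomial.X : Polynomial ℤ) ^ ((i + 1) * t) : Polynomial ℤ) : PowerSeries ℤ)
      = ∏ i ∈ range k, ∑ t ∈ range (L / (i + 1)), ((X : PowerSeries ℤ) ^ (i + 1)) ^ t := by
  rw [← Polynomial.coeToPowerSeries.ringHom_apply, map_prod]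
  refine Finset.prod_congr rfl fun i _ => ?_
  rw [map_sum]
  refine Finset.sum_congr rfl fun t _ => ?_
  rw [Polynomial.coeToPowerSeries.ringHom_apply]
  push_cast
  rw [pow_mul]

lemma tendsto_div_nat {L : ℕ} (hL : 0 < L) (D c : ℕ) :
    Tendsto (fun n : ℕ => (((n - D) / L + c : ℕ) : ℝ) / n) atTop (𝓝 (1 / L)) := by
  have hL0 : (0:ℝ) < L := by exact_mod_cast hL
  have hlim : ∀ e : ℝ, Tendsto (fun n : ℕ => ((n : ℝ) + e) / (L * n)) atTop (𝓝 (1 / L)) := by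
    intro e
    have h1 : Tendsto (fun n : ℕ => 1 / (L : ℝ) + (e / L) / n) atTop (𝓝 (1 / L + 0)) :=
      tendsto_const_nhds.add (tendsto_const_div_atTop_nhds_zero_nat _)
    rw [add_zero] at h1
    apply h1.congr'
    filter_upwards [eventually_gt_atTop 0] with n hn
    have hn' : (n : ℝ) ≠ 0 := Nat.cast_ne_zero.2 hn.ne'
    field_simp
  apply tendsto_of_tendsto_of_tendsto_of_le_of_le' (hlim (-((D : ℝ) + L))) (hlim ((c : ℝ) * L))
  · filter_upwards [eventually_ge_atTop (D + 1)] with n hn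
    have hn0 : (0:ℝ) < n := by exact_mod_cast (show 0 < n by omega)
    have hdm := Nat.div_add_mod (n - D) L
    have hsub : ((n - D : ℕ) : ℝ) = (n : ℝ) - D := by
      rw [Nat.cast_sub (by omega)]
    have hq : (L : ℝ) * ((n - D) / L : ℕ) + ((n - D) % L : ℕ) = (n : ℝ) - D := by
      rw [← hsub]; exact_mod_cast hdm
    have hr : (((n - D) % L : ℕ) : ℝ) < L := by
      exact_mod_cast Nat.mod_lt _ hL
    have hc0 : (0:ℝ) ≤ (c : ℕ) := Nat.cast_nonneg c
    rw [div_le_div_iff₀ (by positivity) hn0]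
    have hkey : (n : ℝ) - ((D : ℝ) + L) ≤ (((n - D) / L + c : ℕ) : ℝ) * L := by
      push_cast
      nlinarith
    nlinarith
  · filter_upwards [eventually_ge_atTop (D + 1)] with n hn
    have hn0 : (0:ℝ) < n := by exact_mod_cast (show 0 < n by omega)
    have hdm := Nat.div_add_mod (n - D) L
    have hsub : ((n - D : ℕ) : ℝ) = (n : ℝ) - D := by
      rw [Nat.cast_sub (by omega)]
    have hq : (L : ℝ) * ((n - D) / L : ℕ) + ((n - D) % L : ℕ) = (n : ℝ) - D := by
      rw [← hsub]; exact_mod_cast hdm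
    have hr0 : (0:ℝ) ≤ (((n - D) % L : ℕ) : ℝ) := Nat.cast_nonneg _
    have hD0 : (0:ℝ) ≤ (D : ℝ) := Nat.cast_nonneg _
    rw [div_le_div_iff₀ hn0 (by positivity)]
    have hkey : (((n - D) / L + c : ℕ) : ℝ) * L ≤ (n : ℝ) + c * L := by
      push_cast
      nlinarith
    nlinarith

set_option maxHeartbeats 1000000 in
theorem polynomial_growth_of_rational_hilbert_series
    (k : ℕ) (hk : 0 < k) (φ : ℕ → ℕ) (hmono : Monotone φ)
    (hmono' : ∀ m n : ℕ, φ m ≤ φ (m + n))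
    (P : Polynomial ℤ)
    (hgen : (PowerSeries.mk fun n => (φ n : ℤ))
        * ∏ i ∈ Finset.range k, (1 - (PowerSeries.X : PowerSeries ℤ) ^ (i + 1))
        = (P : PowerSeries ℤ))
    (hP1 : 0 < P.eval 1) :
    ∃ a b : ℝ, 0 < a ∧ 0 < b ∧
      ∀ᶠ n : ℕ in atTop,
        a * (n : ℝ) ^ (k - 1) ≤ (φ n : ℝ) ∧ (φ n : ℝ) ≤ b * (n : ℝ) ^ (k - 1) := by
  classical
  set L := Nat.factorial k with hLdef
  have hL : 0 < L := Nat.factorial_pos k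
  have hL0 : (0:ℝ) < L := by exact_mod_cast hL
  have hdvd : ∀ i ∈ Finset.range k, (i + 1) ∣ L := fun i hi =>
    Nat.dvd_factorial (Nat.succ_pos i) (by have := Finset.mem_range.1 hi; omega)
  set R : Polynomial ℤ :=
    ∏ i ∈ Finset.range k, ∑ t ∈ Finset.range (L / (i + 1)), Polynomial.X ^ ((i + 1) * t)
    with hRdef
  set Q : Polynomial ℤ := P * R with hQdef
  set F : PowerSeries ℤ := PowerSeries.mk fun n => (φ n : ℤ) with hFdef
  have hRcoe : (R : PowerSeries ℤ)
      = ∏ i ∈ Finset.range k, ∑ t ∈ Finset.range (L / (i + 1)),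
          ((X : PowerSeries ℤ) ^ (i + 1)) ^ t := by
    rw [hRdef]; exact coe_R_eq k L
  have hFQ : F * (1 - X ^ L) ^ k = (Q : PowerSeries ℤ) := by
    rw [hQdef, Polynomial.coe_mul, ← hgen, hRcoe, ← prod_one_sub_mul_geom k L hdvd]
    ring
  -- positivity of Q at 1
  have hQ1 : 0 < Q.eval 1 := by
    rw [hQdef, Polynomial.eval_mul]
    apply mul_pos hP1
    rw [hRdef, Polynomial.eval_prod]
    apply Finset.prod_pos
    intro i hi
    rw [Polynomial.eval_finset_sum]
    have h1 : ∀ t ∈ Finset.range (L / (i + 1)),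
        ((Polynomial.X : Polynomial ℤ) ^ ((i + 1) * t)).eval 1 = 1 := by
      intro t _; simp
    rw [Finset.sum_congr rfl h1, Finset.sum_const, Finset.card_range, nsmul_eq_mul, mul_one]
    exact_mod_cast Nat.div_pos (Nat.le_of_dvd hL (hdvd i hi)) (Nat.succ_pos i)
  -- F = Q * Gser
  have hgpow : Gser L (k - 1) * (1 - X ^ L) ^ k = 1 := by
    have hg := Gser_mul_pow hL (k - 1)
    rwa [show k - 1 + 1 = k from by omega] at hg
  have hF : F = (Q : PowerSeries ℤ) * Gser L (k - 1) := by
    calc F = F * (Gser L (k - 1) * (1 - X ^ L) ^ k) := by rw [hgpow, mul_one]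
      _ = (F * (1 - X ^ L) ^ k) * Gser L (k - 1) := by ring
      _ = (Q : PowerSeries ℤ) * Gser L (k - 1) := by rw [hFQ]
  -- partial sums
  set S : ℕ → ℕ := fun n => ∑ m ∈ Finset.range (n + 1), φ m with hSdef
  set SF : PowerSeries ℤ := PowerSeries.mk fun n => (S n : ℤ) with hSFdef
  have hSF : SF * (1 - X) = F := by
    ext n
    rw [show (1 - X : PowerSeries ℤ) = 1 - X ^ 1 from by rw [pow_one], coeff_sub_aux]
    simp only [hSFdef, hFdef, PowerSeries.coeff_mk]
    cases n with
    | zero => simp [hSdef]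
    | succ n =>
        rw [if_pos (by omega : 1 ≤ n + 1)]
        simp only [Nat.add_sub_cancel]
        have : S (n + 1) = S n + φ (n + 1) := by
          simp [hSdef, Finset.sum_range_succ]
        rw [this]; push_cast; ring
  have hSFQ : SF = (Q : PowerSeries ℤ) * Hser L k := by
    have h2 := Hser_mul_one_sub hL (k - 1)
    rw [show k - 1 + 1 = k from by omega] at h2
    have h1 : Hser L k * ((1 - X) * (1 - X ^ L) ^ k) = 1 := by
      calc Hser L k * ((1 - X) * (1 - X ^ L) ^ k)
          = (Hser L k * (1 - X)) * (1 - X ^ L) ^ k := by ring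
        _ = Gser L (k - 1) * (1 - X ^ L) ^ k := by rw [h2]
        _ = 1 := hgpow
    calc SF = SF * (Hser L k * ((1 - X) * (1 - X ^ L) ^ k)) := by rw [h1, mul_one]
      _ = ((SF * (1 - X)) * (1 - X ^ L) ^ k) * Hser L k := by ring
      _ = (F * (1 - X ^ L) ^ k) * Hser L k := by rw [hSF]
      _ = (Q : PowerSeries ℤ) * Hser L k := by rw [hFQ]
  -- coefficient formulas
  have hφcoeff : ∀ n, (φ n : ℤ) = ∑ i ∈ Finset.range (n + 1), Q.coeff i *
      (if L ∣ n - i then (((n - i) / L + (k - 1)).choose (k - 1) : ℤ) else 0) := by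
    intro n
    have h := congrArg (PowerSeries.coeff (R := ℤ) n) hF
    rw [hFdef, PowerSeries.coeff_mk, PowerSeries.coeff_mul,
      Finset.Nat.sum_antidiagonal_eq_sum_range_succ_mk] at h
    simpa [Gser, PowerSeries.coeff_mk, Polynomial.coeff_coe] using h
  have hScoeff : ∀ n, (S n : ℤ) = ∑ i ∈ Finset.range (n + 1), Q.coeff i *
      ((((n - i) / L + k).choose k : ℕ) : ℤ) := by
    intro n
    have h := congrArg (PowerSeries.coeff (R := ℤ) n) hSFQ
    rw [hSFdef, PowerSeries.coeff_mk, PowerSeries.coeff_mul,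
      Finset.Nat.sum_antidiagonal_eq_sum_range_succ_mk] at h
    simpa [Hser, PowerSeries.coeff_mk, Polynomial.coeff_coe] using h
  -- constants
  set D := Q.natDegree with hDdef
  set CQ : ℤ := ∑ i ∈ Finset.range (D + 1), |Q.coeff i| with hCQdef
  set A : ℤ := ∑ i ∈ Finset.range (D + 1), max (Q.coeff i) 0 with hAdef
  set B : ℤ := ∑ i ∈ Finset.range (D + 1), max (-Q.coeff i) 0 with hBdef
  have hA0 : 0 ≤ A := Finset.sum_nonneg fun i _ => le_max_right _ _
  have hB0 : 0 ≤ B := Finset.sum_nonneg fun i _ => le_max_right _ _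
  have hCQ0 : 0 ≤ CQ := Finset.sum_nonneg fun i _ => abs_nonneg _
  have hAB : A - B = Q.eval 1 := by
    rw [Polynomial.eval_eq_sum_range, hAdef, hBdef, ← Finset.sum_sub_distrib]
    refine Finset.sum_congr rfl fun i _ => ?_
    rw [one_pow, mul_one]
    rcases le_total (Q.coeff i) 0 with h | h
    · rw [max_eq_right h, max_eq_left (by omega : (0:ℤ) ≤ -Q.coeff i)]; ring
    · rw [max_eq_left h, max_eq_right (by omega : -Q.coeff i ≤ (0:ℤ))]; ring
  have hCQsum : ∀ n : ℕ, ∑ i ∈ Finset.range (n + 1), |Q.coeff i| ≤ CQ := by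
    intro n
    rcases le_total n D with h | h
    · exact Finset.sum_le_sum_of_subset_of_nonneg
        (Finset.range_subset_range.2 (by omega)) (fun i _ _ => abs_nonneg _)
    · refine le_of_eq (Finset.sum_subset (Finset.range_subset_range.2 (by omega))
        fun i _ hi => ?_).symm
      have : D < i := by
        simp only [Finset.mem_range, not_lt] at hi; omega
      rw [Polynomial.coeff_eq_zero_of_natDegree_lt this, abs_zero]
  -- upper bound in ℤ
  have hup : ∀ n, (φ n : ℤ) ≤ CQ * (((n / L + (k - 1)).choose (k - 1) : ℕ) : ℤ) := by
    intro n
    rw [hφcoeff n]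
    have hterm : ∀ i ∈ Finset.range (n + 1),
        Q.coeff i * (if L ∣ n - i then (((n - i) / L + (k - 1)).choose (k - 1) : ℤ) else 0)
          ≤ |Q.coeff i| * (((n / L + (k - 1)).choose (k - 1) : ℕ) : ℤ) := by
      intro i _
      have hg0 : (0:ℤ) ≤
          (if L ∣ n - i then (((n - i) / L + (k - 1)).choose (k - 1) : ℤ) else 0) := by
        split_ifs
        · exact_mod_cast Nat.zero_le _
        · exact le_refl 0
      have hgle :
          (if L ∣ n - i then (((n - i) / L + (k - 1)).choose (k - 1) : ℤ) else 0)
            ≤ (((n / L + (k - 1)).choose (k - 1) : ℕ) : ℤ) := by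
        split_ifs
        · exact_mod_cast Nat.choose_le_choose (k - 1)
            (Nat.add_le_add_right (Nat.div_le_div_right (Nat.sub_le n i)) (k - 1))
        · exact_mod_cast Nat.zero_le _
      calc Q.coeff i * _ ≤ |Q.coeff i| *
            (if L ∣ n - i then (((n - i) / L + (k - 1)).choose (k - 1) : ℤ) else 0) :=
            mul_le_mul_of_nonneg_right (le_abs_self _) hg0
        _ ≤ |Q.coeff i| * (((n / L + (k - 1)).choose (k - 1) : ℕ) : ℤ) :=
            mul_le_mul_of_nonneg_left hgle (abs_nonneg _)
    calc (∑ i ∈ Finset.range (n + 1), Q.coeff i *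
          (if L ∣ n - i then (((n - i) / L + (k - 1)).choose (k - 1) : ℤ) else 0))
        ≤ ∑ i ∈ Finset.range (n + 1),
            |Q.coeff i| * (((n / L + (k - 1)).choose (k - 1) : ℕ) : ℤ) :=
          Finset.sum_le_sum hterm
      _ = (∑ i ∈ Finset.range (n + 1), |Q.coeff i|) *
            (((n / L + (k - 1)).choose (k - 1) : ℕ) : ℤ) := by rw [Finset.sum_mul]
      _ ≤ CQ * (((n / L + (k - 1)).choose (k - 1) : ℕ) : ℤ) :=
          mul_le_mul_of_nonneg_right (hCQsum n) (by exact_mod_cast Nat.zero_le _)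
  -- lower bound in ℤ
  have hlow : ∀ n, D ≤ n →
      A * ((((n - D) / L + k).choose k : ℕ) : ℤ)
        - B * (((n / L + k).choose k : ℕ) : ℤ) ≤ (S n : ℤ) := by
    intro n hn
    rw [hScoeff n]
    rw [show (∑ i ∈ Finset.range (n + 1), Q.coeff i * ((((n - i) / L + k).choose k : ℕ) : ℤ))
        = ∑ i ∈ Finset.range (D + 1), Q.coeff i * ((((n - i) / L + k).choose k : ℕ) : ℤ) from
      (Finset.sum_subset (Finset.range_subset_range.2 (by omega)) fun i _ hi => by
        have : D < i := by simp only [Finset.mem_range, not_lt] at hi; omega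
        rw [Polynomial.coeff_eq_zero_of_natDegree_lt this, zero_mul]).symm]
    rw [hAdef, hBdef, Finset.sum_mul, Finset.sum_mul, ← Finset.sum_sub_distrib]
    refine Finset.sum_le_sum fun i hi => ?_
    have hiD : i ≤ D := by have := Finset.mem_range.1 hi; omega
    have hlo : ((((n - D) / L + k).choose k : ℕ) : ℤ)
        ≤ ((((n - i) / L + k).choose k : ℕ) : ℤ) := by
      exact_mod_cast Nat.choose_le_choose k
        (Nat.add_le_add_right (Nat.div_le_div_right (Nat.sub_le_sub_left hiD n)) k)
    have hhi : ((((n - i) / L + k).choose k : ℕ) : ℤ)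
        ≤ (((n / L + k).choose k : ℕ) : ℤ) := by
      exact_mod_cast Nat.choose_le_choose k
        (Nat.add_le_add_right (Nat.div_le_div_right (Nat.sub_le n i)) k)
    rcases le_total (Q.coeff i) 0 with h | h
    · rw [max_eq_right h, max_eq_left (by omega : (0:ℤ) ≤ -Q.coeff i)]
      have := mul_le_mul_of_nonpos_left hhi h
      nlinarith
    · rw [max_eq_left h, max_eq_right (by omega : -Q.coeff i ≤ (0:ℤ))]
      have := mul_le_mul_of_nonneg_left hlo h
      nlinarith
  -- S vs φ
  have hSmono : ∀ n, (S n : ℤ) ≤ ((n : ℤ) + 1) * (φ n : ℤ) := by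
    intro n
    have h1 : S n ≤ (n + 1) * φ n := by
      rw [hSdef]
      calc ∑ m ∈ Finset.range (n + 1), φ m ≤ ∑ _m ∈ Finset.range (n + 1), φ n :=
            Finset.sum_le_sum fun m hm => hmono (by have := Finset.mem_range.1 hm; omega)
        _ = (n + 1) * φ n := by rw [Finset.sum_const, Finset.card_range, smul_eq_mul]
    exact_mod_cast h1
  -- move to ℝ
  have hcR : (0:ℝ) < ((Q.eval 1 : ℤ) : ℝ) := by exact_mod_cast hQ1
  set cR : ℝ := ((Q.eval 1 : ℤ) : ℝ) with hcRdef
  have hABR : (A : ℝ) - (B : ℝ) = cR := by rw [hcRdef]; exact_mod_cast hAB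
  have hA0R : (0:ℝ) ≤ (A : ℝ) := by exact_mod_cast hA0
  have hB0R : (0:ℝ) ≤ (B : ℝ) := by exact_mod_cast hB0
  have hfact : (0:ℝ) < ((Nat.factorial k) : ℝ) := by exact_mod_cast Nat.factorial_pos k
  -- tendsto
  have hu := tendsto_div_nat hL D 1
  have hv := tendsto_div_nat hL 0 k
  simp only [Nat.sub_zero] at hv
  have hT : Tendsto (fun n : ℕ =>
      (A : ℝ) * ((((n - D) / L + 1 : ℕ) : ℝ) / n) ^ k
        - (B : ℝ) * (((n / L + k : ℕ) : ℝ) / n) ^ k) atTop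
      (𝓝 ((A : ℝ) * (1 / L) ^ k - (B : ℝ) * (1 / L) ^ k)) :=
    (((hu.pow k).const_mul _).sub ((hv.pow k).const_mul _))
  have hwpos : (0:ℝ) < cR * (1 / (L:ℝ)) ^ k := by positivity
  have hev : ∀ᶠ n : ℕ in atTop, cR * (1 / (L:ℝ)) ^ k / 2 ≤
      (A : ℝ) * ((((n - D) / L + 1 : ℕ) : ℝ) / n) ^ k
        - (B : ℝ) * (((n / L + k : ℕ) : ℝ) / n) ^ k := by
    apply Filter.Tendsto.eventually_const_le _ hT
    have : (A : ℝ) * (1 / (L:ℝ)) ^ k - (B : ℝ) * (1 / (L:ℝ)) ^ k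
        = cR * (1 / (L:ℝ)) ^ k := by rw [← sub_mul, hABR]
    rw [this]
    linarith
  -- choose a and b
  refine ⟨cR * (1 / (L:ℝ)) ^ k / (4 * ((Nat.factorial k) : ℝ)), ((CQ : ℝ) + 1) * 2 ^ (k - 1),
    div_pos hwpos (by positivity), by positivity, ?_⟩
  filter_upwards [hev, eventually_ge_atTop (max (max D k) 1)] with n hn1 hn2
  have hnD : D ≤ n := le_trans (le_trans (le_max_left _ _) (le_max_left _ _)) hn2
  have hnk : k ≤ n := le_trans (le_trans (le_max_right _ _) (le_max_left _ _)) hn2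
  have hn1' : 1 ≤ n := le_trans (le_max_right _ _) hn2
  have hn0 : (0:ℝ) < n := by exact_mod_cast hn1'
  have hφ0 : (0:ℝ) ≤ (φ n : ℝ) := Nat.cast_nonneg _
  constructor
  · -- lower bound
    have hC1 : ((((n - D) / L + 1 : ℕ) : ℝ)) ^ k
        ≤ ((Nat.factorial k) : ℝ) * ((((n - D) / L + k).choose k : ℕ) : ℝ) := by
      have h := Nat.pow_le_choose (α := ℝ) k ((n - D) / L + k)
      rw [show (n - D) / L + k + 1 - k = (n - D) / L + 1 from by generalize (n - D) / L = x; omega] at h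
      rw [div_le_iff₀ hfact] at h
      linarith
    have hC2 : ((Nat.factorial k) : ℝ) * (((n / L + k).choose k : ℕ) : ℝ)
        ≤ (((n / L + k : ℕ) : ℝ)) ^ k := by
      have h := Nat.choose_le_pow_div (α := ℝ) k (n / L + k)
      rw [le_div_iff₀ hfact] at h
      push_cast at h ⊢
      linarith
    have hlowR : (A : ℝ) * ((((n - D) / L + k).choose k : ℕ) : ℝ)
        - (B : ℝ) * (((n / L + k).choose k : ℕ) : ℝ) ≤ (S n : ℝ) := by
      exact_mod_cast hlow n hnD
    have hnk0 : (0:ℝ) < (n:ℝ) ^ k := by positivity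
    have hq12 : cR * (1 / (L:ℝ)) ^ k / 2 * (n:ℝ) ^ k
        ≤ ((Nat.factorial k) : ℝ) * (S n : ℝ) := by
      have e1 : (A : ℝ) * ((((n - D) / L + 1 : ℕ) : ℝ)) ^ k
          ≤ (A : ℝ) * (((Nat.factorial k) : ℝ) * ((((n - D) / L + k).choose k : ℕ) : ℝ)) :=
        mul_le_mul_of_nonneg_left hC1 hA0R
      have e2 : (B : ℝ) * (((Nat.factorial k) : ℝ) * (((n / L + k).choose k : ℕ) : ℝ))
          ≤ (B : ℝ) * (((n / L + k : ℕ) : ℝ)) ^ k :=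
        mul_le_mul_of_nonneg_left hC2 hB0R
      have e3 := mul_le_mul_of_nonneg_left hlowR hfact.le
      have hne : ((n:ℝ)) ^ k ≠ 0 := hnk0.ne'
      have h5 := mul_le_mul_of_nonneg_right hn1 hnk0.le
      have hrw : ((A : ℝ) * ((((n - D) / L + 1 : ℕ) : ℝ) / n) ^ k
            - (B : ℝ) * (((n / L + k : ℕ) : ℝ) / n) ^ k) * (n:ℝ) ^ k
          = (A : ℝ) * ((((n - D) / L + 1 : ℕ) : ℝ)) ^ k
            - (B : ℝ) * (((n / L + k : ℕ) : ℝ)) ^ k := by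
        rw [sub_mul, div_pow, div_pow, mul_assoc, mul_assoc, div_mul_cancel₀ _ hne,
          div_mul_cancel₀ _ hne]
      rw [hrw] at h5
      linarith
    have hq3 : (S n : ℝ) ≤ ((n:ℝ) + 1) * (φ n : ℝ) := by exact_mod_cast hSmono n
    have hn2' : (n:ℝ) + 1 ≤ 2 * n := by
      have : (1:ℝ) ≤ n := by exact_mod_cast hn1'
      linarith
    have hkpow : (n:ℝ) ^ k = (n:ℝ) ^ (k - 1) * n := by
      rw [← pow_succ, show k - 1 + 1 = k from by omega]
    rw [div_mul_eq_mul_div, div_le_iff₀ (by positivity : (0:ℝ) < 4 * ((Nat.factorial k) : ℝ))]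
    have e5 : cR * (1 / (L:ℝ)) ^ k / 2 * ((n:ℝ) ^ (k - 1) * n)
        ≤ ((Nat.factorial k) : ℝ) * (2 * n * (φ n : ℝ)) := by
      rw [← hkpow]
      have e6 := mul_le_mul_of_nonneg_left hq3 hfact.le
      have e7 : ((Nat.factorial k) : ℝ) * (((n:ℝ) + 1) * (φ n : ℝ))
          ≤ ((Nat.factorial k) : ℝ) * (2 * n * (φ n : ℝ)) :=
        mul_le_mul_of_nonneg_left (mul_le_mul_of_nonneg_right hn2' hφ0) hfact.le
      linarith
    have e8 : (cR * (1 / (L:ℝ)) ^ k * (n:ℝ) ^ (k - 1)) * n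
        ≤ ((φ n : ℝ) * (4 * ((Nat.factorial k) : ℝ))) * n := by linarith
    exact le_of_mul_le_mul_right e8 hn0
  · -- upper bound
    have hupR : (φ n : ℝ) ≤ (CQ : ℝ) * (((n / L + (k - 1)).choose (k - 1) : ℕ) : ℝ) := by
      exact_mod_cast hup n
    have hch : ((n / L + (k - 1)).choose (k - 1) : ℕ) ≤ 2 ^ (k - 1) * n ^ (k - 1) := by
      calc (n / L + (k - 1)).choose (k - 1) ≤ (n / L + (k - 1)) ^ (k - 1) :=
            Nat.choose_le_pow _ _
        _ ≤ (2 * n) ^ (k - 1) := by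
            apply Nat.pow_le_pow_left
            have := Nat.div_le_self n L
            omega
        _ = 2 ^ (k - 1) * n ^ (k - 1) := by rw [mul_pow]
    have hchR : (((n / L + (k - 1)).choose (k - 1) : ℕ) : ℝ) ≤ 2 ^ (k - 1) * (n:ℝ) ^ (k - 1) := by
      exact_mod_cast hch
    have hCQ0R : (0:ℝ) ≤ (CQ : ℝ) := by exact_mod_cast hCQ0
    have hp0 : (0:ℝ) ≤ 2 ^ (k - 1) * (n:ℝ) ^ (k - 1) := by positivity
    calc (φ n : ℝ) ≤ (CQ : ℝ) * (((n / L + (k - 1)).choose (k - 1) : ℕ) : ℝ) := hupR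
      _ ≤ (CQ : ℝ) * (2 ^ (k - 1) * (n:ℝ) ^ (k - 1)) :=
          mul_le_mul_of_nonneg_left hchR hCQ0R
      _ ≤ ((CQ : ℝ) + 1) * (2 ^ (k - 1) * (n:ℝ) ^ (k - 1)) := by nlinarith
      _ = ((CQ : ℝ) + 1) * 2 ^ (k - 1) * (n:ℝ) ^ (k - 1) := by ring
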